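/- Let ν be a Borel probability measure on a topological space M, and let Q be a Borel probability measure on the space of Borel probability measures on M that is the pushforward under the map (s, x) ↦ Σᵢ sᵢ δ_{xᵢ} of π ⊗ ν^⊗∞, where π is a probability measure on the infinite ordered simplex T = {s : sᵢ ≥ s_{i+1} ≥ 0, Σᵢ sᵢ = 1}. Then for every p ∈ [1,∞) and every f ∈ L^p(ν), the function f* : η ↦ ∫ f dη is well-defined Q-almost everywhere, belongs to L^p(Q), and the map f ↦ f* from L^p(ν) to L^p(Q) is Lipschitz with constant at most 1 (in particular ‖f*‖_{L^p(Q)} ≤ ‖f‖_{L^p(ν)}). -/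

import Mathlib

open MeasureTheory ENNReal

/-- Let `ν` be a Borel probability measure on `M` and let `Q` be the
pushforward, under `em : (s, x) ↦ Σᵢ sᵢ δ_{xᵢ}`, of `π ⊗ ν^⊗∞`, where `π` is a probability
measure on the infinite ordered simplex `T`.  Then for every `p ∈ [1,∞)` and every
`f ∈ L^p(ν)`, the function `f* : η ↦ ∫ f dη` is well defined `Q`-a.e. (independent of the
`ν`-representative of `f`), belongs to `L^p(Q)`, satisfies `‖f*‖_{L^p(Q)} ≤ ‖f‖_{L^p(ν)}`,
and `f ↦ f*` is `1`-Lipschitz from `L^p(ν)` to `L^p(Q)`. -/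
theorem stmt0 {M : Type*} [MeasurableSpace M]
    (ν : Measure M) [IsProbabilityMeasure ν]
    -- the infinite product measure `ν^⊗∞`, characterized by its finite-dimensional marginals
    (νInf : Measure (ℕ → M)) [IsProbabilityMeasure νInf]
    (hνInf : ∀ (n : ℕ) (A : Fin n → Set M), (∀ i, MeasurableSet (A i)) →
      νInf {x | ∀ i : Fin n, x (i : ℕ) ∈ A i} = ∏ i, ν (A i))
    -- the infinite ordered simplex
    (T : Set (ℕ → ℝ))
    (hT : T = {s | (∀ i, s (i + 1) ≤ s i) ∧ (∀ i, 0 ≤ s i) ∧ ∑' i, s i = 1})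
    (π : Measure T) [IsProbabilityMeasure π]
    -- the measure representation map `em`
    (em : T × (ℕ → M) → Measure M)
    (hem : ∀ p, em p =
      Measure.sum fun i => (ENNReal.ofReal ((p.1 : ℕ → ℝ) i)) • Measure.dirac (p.2 i))
    (hm : Measurable em)
    (Q : Measure (Measure M))
    (hQ : Q = (π.prod νInf).map em)
    (p : ℝ≥0∞) (hp : 1 ≤ p) (hp' : p ≠ ∞) :
    -- well-definedness `Q`-a.e.
    (∀ f g : M → ℝ, f =ᵐ[ν] g →
      (fun η : Measure M => ∫ x, f x ∂η) =ᵐ[Q] fun η : Measure M => ∫ x, g x ∂η) ∧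
    -- membership in `L^p(Q)`
    (∀ f : M → ℝ, MemLp f p ν → MemLp (fun η : Measure M => ∫ x, f x ∂η) p Q) ∧
    -- norm contraction
    (∀ f : M → ℝ, MemLp f p ν →
      eLpNorm (fun η : Measure M => ∫ x, f x ∂η) p Q ≤ eLpNorm f p ν) ∧
    -- `1`-Lipschitz property of `f ↦ f*`
    (∀ f g : M → ℝ, MemLp f p ν → MemLp g p ν →
      eLpNorm ((fun η : Measure M => ∫ x, f x ∂η) - fun η : Measure M => ∫ x, g x ∂η) p Q ≤
        eLpNorm (f - g) p ν) := by
  subst hQ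
  set μ0 := π.prod νInf with hμ0
  have hp0 : p ≠ 0 := by
    intro h; rw [h] at hp; exact absurd hp (by simp)
  have hpr1 : 1 ≤ p.toReal := by
    have := ENNReal.toReal_mono hp' hp
    simpa using this
  have hpr_pos : 0 < p.toReal := lt_of_lt_of_le one_pos hpr1
  -- coordinate marginals of νInf are ν
  have hmarg : ∀ i : ℕ, Measure.map (fun x : ℕ → M => x i) νInf = ν := by
    intro i
    ext A hA
    rw [Measure.map_apply (measurable_pi_apply i) hA]
    have h := hνInf (i + 1) (fun j => if (j : ℕ) = i then A else Set.univ)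
      (by intro j; split
          · exact hA
          · exact MeasurableSet.univ)
    have hset : {x : ℕ → M | ∀ j : Fin (i + 1),
        x (j : ℕ) ∈ (if ((j : ℕ)) = i then A else Set.univ)} = (fun x : ℕ → M => x i) ⁻¹' A := by
      ext x
      simp only [Set.mem_setOf_eq, Set.mem_preimage]
      constructor
      · intro h'
        have := h' ⟨i, Nat.lt_succ_self i⟩
        simpa using this
      · intro hx j
        by_cases hj : (j : ℕ) = i
        · simpa [hj] using hx
        · simp [hj]
    rw [hset] at h
    rw [h]
    rw [Finset.prod_eq_single (⟨i, Nat.lt_succ_self i⟩ : Fin (i + 1))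
      (fun j _ hj => by
        have : (j : ℕ) ≠ i := fun hc => hj (Fin.ext (by simpa using hc))
        simp [this])
      (by intro h'; exact absurd (Finset.mem_univ _) h')]
    simp
  have hlintcoord : ∀ (i : ℕ) (F : M → ℝ≥0∞), Measurable F →
      ∫⁻ x, F (x i) ∂νInf = ∫⁻ y, F y ∂ν := by
    intro i F hF
    rw [← hmarg i, lintegral_map hF (measurable_pi_apply i)]
  -- total mass of the weights
  have hsum1 : ∀ s : T, ∑' i, ENNReal.ofReal ((s : ℕ → ℝ) i) = 1 := by
    intro s
    have hs : ((s : ℕ → ℝ)) ∈ {s : ℕ → ℝ |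
        (∀ i, s (i + 1) ≤ s i) ∧ (∀ i, 0 ≤ s i) ∧ ∑' i, s i = 1} := by
      rw [← hT]; exact s.2
    obtain ⟨-, hnn, hsum⟩ := hs
    have hsummable : Summable ((s : ℕ → ℝ)) := by
      by_contra h
      rw [tsum_eq_zero_of_not_summable h] at hsum; norm_num at hsum
    have h := ENNReal.ofReal_tsum_of_nonneg hnn hsummable
    rw [hsum, ENNReal.ofReal_one] at h
    exact h.symm
  -- lintegral against `em q`
  have hemlint : ∀ (q : T × (ℕ → M)) (F : M → ℝ≥0∞), Measurable F →
      ∫⁻ y, F y ∂(em q) = ∑' i, ENNReal.ofReal ((q.1 : ℕ → ℝ) i) * F (q.2 i) := by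
    intro q F hF
    rw [hem q, lintegral_sum_measure]
    congr 1; funext i
    rw [lintegral_smul_measure, lintegral_dirac' _ hF, smul_eq_mul]
  have hemprob : ∀ q, IsProbabilityMeasure (em q) := by
    intro q
    constructor
    have h := hemlint q (fun _ => 1) measurable_const
    rw [lintegral_one] at h
    rw [h]
    simpa [mul_one] using hsum1 q.1
  -- the key lintegral identity
  have hkey : ∀ F : M → ℝ≥0∞, Measurable F →
      ∫⁻ q, (∫⁻ y, F y ∂(em q)) ∂μ0 = ∫⁻ y, F y ∂ν := by
    intro F hF
    have hmeasF : Measurable fun q : T × (ℕ → M) =>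
        ∑' i, ENNReal.ofReal ((q.1 : ℕ → ℝ) i) * F (q.2 i) := by
      apply Measurable.ennreal_tsum
      intro i
      exact (ENNReal.measurable_ofReal.comp ((measurable_pi_apply i).comp
        (measurable_subtype_coe.comp measurable_fst))).mul
        (hF.comp ((measurable_pi_apply i).comp measurable_snd))
    calc ∫⁻ q, (∫⁻ y, F y ∂(em q)) ∂μ0
        = ∫⁻ q, ∑' i, ENNReal.ofReal ((q.1 : ℕ → ℝ) i) * F (q.2 i) ∂μ0 :=
          lintegral_congr fun q => hemlint q F hF
      _ = ∫⁻ s, ∫⁻ x, ∑' i, ENNReal.ofReal ((s : ℕ → ℝ) i) * F (x i) ∂νInf ∂π :=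
          MeasureTheory.lintegral_prod _ hmeasF.aemeasurable
      _ = ∫⁻ s : T, ∑' i, ENNReal.ofReal ((s : ℕ → ℝ) i) * ∫⁻ y, F y ∂ν ∂π := by
          refine lintegral_congr fun s => ?_
          have ht := lintegral_tsum (μ := νInf)
            (f := fun (i : ℕ) (x : ℕ → M) => ENNReal.ofReal ((s : ℕ → ℝ) i) * F (x i))
            (fun i => ((hF.comp (measurable_pi_apply i)).const_mul _).aemeasurable)
          rw [ht]
          refine tsum_congr fun i => ?_
          show ∫⁻ (a : ℕ → M), ENNReal.ofReal ((s : ℕ → ℝ) i) * F (a i) ∂νInf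
            = ENNReal.ofReal ((s : ℕ → ℝ) i) * ∫⁻ y, F y ∂ν
          rw [lintegral_const_mul (ENNReal.ofReal ((s : ℕ → ℝ) i))
            (f := fun a : ℕ → M => F (a i)) (hF.comp (measurable_pi_apply i)),
            hlintcoord i F hF]
      _ = ∫⁻ y, F y ∂ν := by
          rw [lintegral_congr (fun s : T => by
            rw [ENNReal.tsum_mul_right, hsum1 s, one_mul])]
          simp [lintegral_const]
  -- pointwise Jensen inequality
  have hjensen : ∀ f : M → ℝ, StronglyMeasurable f → ∀ η : Measure M, IsProbabilityMeasure η →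
      (‖∫ y, f y ∂η‖₊ : ℝ≥0∞) ^ p.toReal ≤ ∫⁻ y, (‖f y‖₊ : ℝ≥0∞) ^ p.toReal ∂η := by
    intro f hf η hη
    haveI := hη
    have h1 : (‖∫ y, f y ∂η‖₊ : ℝ≥0∞) ≤ eLpNorm f 1 η := by
      rw [eLpNorm_one_eq_lintegral_enorm]
      exact enorm_integral_le_lintegral_enorm f
    have h2 : eLpNorm f 1 η ≤ eLpNorm f p η :=
      eLpNorm_le_eLpNorm_of_exponent_le hp hf.aestronglyMeasurable
    have h3 := ENNReal.rpow_le_rpow (h1.trans h2) (le_of_lt hpr_pos)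
    refine h3.trans ?_
    rw [eLpNorm_eq_lintegral_rpow_enorm_toReal hp0 hp', ← ENNReal.rpow_mul, one_div,
      inv_mul_cancel₀ (ne_of_gt hpr_pos), ENNReal.rpow_one]
    exact le_rfl
  -- well-definedness: Part 1
  have hwd : ∀ f g : M → ℝ, f =ᵐ[ν] g →
      (fun η : Measure M => ∫ x, f x ∂η) =ᵐ[μ0.map em] fun η : Measure M => ∫ x, g x ∂η := by
    intro f g hfg
    have hne : ν {x | f x ≠ g x} = 0 := hfg
    obtain ⟨N, hNsub, hNm, hN0⟩ := exists_measurable_superset_of_null hne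
    -- Q-a.e. η, η N = 0
    have hS : MeasurableSet {η : Measure M | η N ≠ 0} :=
      ((Measure.measurable_coe hNm) (measurableSet_singleton 0)).compl
    have hQS : (μ0.map em) {η : Measure M | η N ≠ 0} = 0 := by
      rw [Measure.map_apply hm hS]
      have hsub : em ⁻¹' {η : Measure M | η N ≠ 0} ⊆
          Set.univ ×ˢ {x : ℕ → M | ∃ i, x i ∈ N} := by
        intro q hq
        refine ⟨Set.mem_univ _, ?_⟩
        by_contra hc
        simp only [Set.mem_setOf_eq] at hc
        push_neg at hc
        apply hq
        rw [hem q, Measure.sum_apply _ hNm]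
        simp only [Measure.smul_apply, smul_eq_mul]
        refine ENNReal.tsum_eq_zero.2 fun i => ?_
        rw [Measure.dirac_apply' _ hNm, Set.indicator_of_notMem (hc i)]
        simp
      refine measure_mono_null hsub ?_
      rw [hμ0, Measure.prod_prod]
      have hB : νInf {x : ℕ → M | ∃ i, x i ∈ N} = 0 := by
        have : {x : ℕ → M | ∃ i, x i ∈ N} = ⋃ i, (fun x : ℕ → M => x i) ⁻¹' N := by
          ext x; simp [Set.mem_iUnion]
        rw [this]
        refine measure_iUnion_null fun i => ?_
        rw [← Measure.map_apply (measurable_pi_apply i) hNm, hmarg i]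
        exact hN0
      rw [hB, mul_zero]
    have hae : ∀ᵐ η ∂(μ0.map em), η N = 0 := by
      rw [ae_iff]
      exact hQS
    filter_upwards [hae] with η hη
    refine integral_congr_ae ?_
    have : {x | f x ≠ g x} ⊆ N := hNsub
    exact measure_mono_null this hη
  -- a.e. integrability over Q, for strongly measurable MemLp functions
  have hae_int : ∀ f : M → ℝ, StronglyMeasurable f → MemLp f p ν →
      ∀ᵐ η ∂(μ0.map em), Integrable f η := by
    intro f hf hmem
    have hfm : Measurable fun y => (‖f y‖₊ : ℝ≥0∞) := hf.measurable.enorm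
    have hL1 : ∫⁻ y, (‖f y‖₊ : ℝ≥0∞) ∂ν < ∞ := by
      have h := (hmem.mono_exponent hp).2
      rwa [eLpNorm_one_eq_lintegral_enorm] at h
    have hS : MeasurableSet {η : Measure M | ∫⁻ y, (‖f y‖₊ : ℝ≥0∞) ∂η = ∞} :=
      (Measure.measurable_lintegral hfm) (measurableSet_singleton ∞)
    have h0 : (μ0.map em) {η : Measure M | ∫⁻ y, (‖f y‖₊ : ℝ≥0∞) ∂η = ∞} = 0 := by
      rw [Measure.map_apply hm hS]
      have hfin : ∫⁻ q, (∫⁻ y, (‖f y‖₊ : ℝ≥0∞) ∂(em q)) ∂μ0 ≠ ∞ := by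
        rw [hkey _ hfm]; exact hL1.ne
      have hae := ae_lt_top ((Measure.measurable_lintegral hfm).comp hm) hfin
      rw [ae_iff] at hae
      convert hae using 2
      ext q
      simp [lt_top_iff_ne_top]
    have hfinae : ∀ᵐ η ∂(μ0.map em), ∫⁻ y, (‖f y‖₊ : ℝ≥0∞) ∂η < ∞ := by
      rw [ae_iff]
      convert h0 using 2
      ext η
      simp [lt_top_iff_ne_top]
    filter_upwards [hfinae] with η hη
    exact ⟨hf.aestronglyMeasurable, hη⟩
  -- measurable version of f*
  have hGmeas : ∀ f : M → ℝ, StronglyMeasurable f →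
      Measurable fun η : Measure M =>
        (∫⁻ y, ENNReal.ofReal (f y) ∂η).toReal - (∫⁻ y, ENNReal.ofReal (-f y) ∂η).toReal := by
    intro f hf
    exact ((Measure.measurable_lintegral
        (ENNReal.measurable_ofReal.comp hf.measurable)).ennreal_toReal).sub
      ((Measure.measurable_lintegral
        (ENNReal.measurable_ofReal.comp hf.measurable.neg)).ennreal_toReal)
  have hG_ae : ∀ f : M → ℝ, StronglyMeasurable f → MemLp f p ν →
      (fun η : Measure M => ∫ x, f x ∂η) =ᵐ[μ0.map em]
        fun η : Measure M =>
          (∫⁻ y, ENNReal.ofReal (f y) ∂η).toReal - (∫⁻ y, ENNReal.ofReal (-f y) ∂η).toReal := by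
    intro f hf hmem
    filter_upwards [hae_int f hf hmem] with η hη
    exact integral_eq_lintegral_pos_part_sub_lintegral_neg_part hη
  -- norm bound for strongly measurable functions
  have hbound : ∀ f : M → ℝ, StronglyMeasurable f → MemLp f p ν →
      eLpNorm (fun η : Measure M => ∫ x, f x ∂η) p (μ0.map em) ≤ eLpNorm f p ν := by
    intro f hf hmem
    rw [eLpNorm_eq_lintegral_rpow_enorm_toReal hp0 hp', eLpNorm_eq_lintegral_rpow_enorm_toReal hp0 hp']
    refine ENNReal.rpow_le_rpow ?_ (by positivity)
    calc ∫⁻ η, (‖∫ x, f x ∂η‖₊ : ℝ≥0∞) ^ p.toReal ∂(μ0.map em)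
        ≤ ∫⁻ q, (‖∫ x, f x ∂(em q)‖₊ : ℝ≥0∞) ^ p.toReal ∂μ0 :=
          lintegral_map_le _ em
      _ ≤ ∫⁻ q, (∫⁻ y, (‖f y‖₊ : ℝ≥0∞) ^ p.toReal ∂(em q)) ∂μ0 :=
          lintegral_mono fun q => hjensen f hf (em q) (hemprob q)
      _ = ∫⁻ y, (‖f y‖₊ : ℝ≥0∞) ^ p.toReal ∂ν :=
          hkey _ (hf.measurable.enorm.pow_const _)
  -- general norm bound
  have hboundgen : ∀ f : M → ℝ, MemLp f p ν →
      eLpNorm (fun η : Measure M => ∫ x, f x ∂η) p (μ0.map em) ≤ eLpNorm f p ν := by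
    intro f hmem
    set f' := hmem.1.mk f with hf'def
    have hf' : StronglyMeasurable f' := hmem.1.stronglyMeasurable_mk
    have hff' : f =ᵐ[ν] f' := hmem.1.ae_eq_mk
    have hmem' : MemLp f' p ν := hmem.ae_eq hff'
    calc eLpNorm (fun η : Measure M => ∫ x, f x ∂η) p (μ0.map em)
        = eLpNorm (fun η : Measure M => ∫ x, f' x ∂η) p (μ0.map em) :=
          eLpNorm_congr_ae (hwd f f' hff')
      _ ≤ eLpNorm f' p ν := hbound f' hf' hmem'
      _ = eLpNorm f p ν := (eLpNorm_congr_ae hff').symm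
  refine ⟨hwd, ?_, hboundgen, ?_⟩
  · -- membership
    intro f hmem
    set f' := hmem.1.mk f with hf'def
    have hf' : StronglyMeasurable f' := hmem.1.stronglyMeasurable_mk
    have hff' : f =ᵐ[ν] f' := hmem.1.ae_eq_mk
    have hmem' : MemLp f' p ν := hmem.ae_eq hff'
    have hAESM : AEStronglyMeasurable (fun η : Measure M => ∫ x, f x ∂η) (μ0.map em) := by
      have hG := hG_ae f' hf' hmem'
      exact ((hGmeas f' hf').aestronglyMeasurable.congr hG.symm).congr
        ((hwd f f' hff').symm)
    refine ⟨hAESM, ?_⟩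
    exact lt_of_le_of_lt (hboundgen f hmem) hmem.2
  · -- Lipschitz
    intro f g hfmem hgmem
    set f' := hfmem.1.mk f with hf'def
    have hf' : StronglyMeasurable f' := hfmem.1.stronglyMeasurable_mk
    have hff' : f =ᵐ[ν] f' := hfmem.1.ae_eq_mk
    have hfmem' : MemLp f' p ν := hfmem.ae_eq hff'
    set g' := hgmem.1.mk g with hg'def
    have hg' : StronglyMeasurable g' := hgmem.1.stronglyMeasurable_mk
    have hgg' : g =ᵐ[ν] g' := hgmem.1.ae_eq_mk
    have hgmem' : MemLp g' p ν := hgmem.ae_eq hgg'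
    have hsubν : f - g =ᵐ[ν] f' - g' := hff'.sub hgg'
    have h1 : ((fun η : Measure M => ∫ x, f x ∂η) - fun η : Measure M => ∫ x, g x ∂η)
        =ᵐ[μ0.map em] fun η : Measure M => ∫ x, (f' - g') x ∂η := by
      filter_upwards [hwd f f' hff', hwd g g' hgg',
        hae_int f' hf' hfmem', hae_int g' hg' hgmem'] with η h₁ h₂ h₃ h₄
      simp only [Pi.sub_apply]
      rw [h₁, h₂, ← integral_sub h₃ h₄]
    calc eLpNorm ((fun η : Measure M => ∫ x, f x ∂η) - fun η : Measure M => ∫ x, g x ∂η) p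
          (μ0.map em)
        = eLpNorm (fun η : Measure M => ∫ x, (f' - g') x ∂η) p (μ0.map em) :=
          eLpNorm_congr_ae h1
      _ ≤ eLpNorm (f' - g') p ν := hbound (f' - g') (hf'.sub hg') (hfmem'.sub hgmem')
      _ = eLpNorm (f - g) p ν := (eLpNorm_congr_ae hsubν).symm
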